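/- Disjointification of determinantal vectors: with l_k ≥ 1, Σ l_k = n, d_k ≥ 1, and s_0 ≤ ··· ≤ s_n positive integers, if m ∈ ℤ^r is determinantal (N(m) = {0,1}) then there exists a determinantal m' ∈ ℤ^r such that the sets P_1(m'),...,P_r(m') are pairwise disjoint and ⋃_k P_k(m) ⊆ ⋃_k P_k(m'). -/

import Mathlib

/-- `P_k(m) = {z ∈ ℤ : m < z·d ≤ m + l}`, the integers in `(m/d, (m+l)/d]`. -/
def Pset (m : ℤ) (d l : ℕ) : Set ℤ := {z : ℤ | m < z * d ∧ z * d ≤ m + l}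

/-- The set of sums of `p` distinct entries of `s`. -/
def Sset {n : ℕ} (s : Fin (n + 1) → ℕ) (p : ℕ) : Set ℤ :=
  {t : ℤ | ∃ A : Finset (Fin (n + 1)), A.card = p ∧ t = ∑ i ∈ A, (s i : ℤ)}

/-- `q(z) = Σ_{P_k(m) < z} l_k`, where `P_k < z` means `z·d_k > m_k + l_k`. -/
def qval {r : ℕ} (l d : Fin r → ℕ) (m : Fin r → ℤ) (z : ℤ) : ℕ :=
  ∑ k ∈ Finset.univ.filter (fun k => m k + (l k : ℤ) < z * (d k : ℤ)), l k

/-- `N(m) = { p − q(z) : p ∈ [0, n+1], z ∈ Q_p }` with `Q_p = S_p \ ⋃_k P_k(m)`. -/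
def Nset {r n : ℕ} (l d : Fin r → ℕ) (s : Fin (n + 1) → ℕ) (m : Fin r → ℤ) : Set ℤ :=
  {ν : ℤ | ∃ p : ℕ, p ≤ n + 1 ∧ ∃ z : ℤ,
    (z ∈ Sset s p ∧ ∀ k, z ∉ Pset (m k) (d k) (l k)) ∧
    ν = (p : ℤ) - (qval l d m z : ℤ)}

/-- Finset version of `Pset`. -/
noncomputable def Pfin (m : ℤ) (d l : ℕ) : Finset ℤ := Finset.Ioc (m / (d : ℤ)) ((m + (l : ℤ)) / (d : ℤ))

lemma mem_Pfin {m : ℤ} {d l : ℕ} (hd : 1 ≤ d) {z : ℤ} :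
    z ∈ Pfin m d l ↔ z ∈ Pset m d l := by
  have hd0 : (0 : ℤ) < (d : ℤ) := by exact_mod_cast hd
  simp only [Pfin, Finset.mem_Ioc, Pset, Set.mem_setOf_eq]
  rw [Int.ediv_lt_iff_lt_mul hd0, Int.le_ediv_iff_mul_le hd0]

lemma card_Pfin {m : ℤ} {d l : ℕ} (hd : 1 ≤ d) : (Pfin m d l).card ≤ l := by
  have hd0 : (0 : ℤ) < (d : ℤ) := by exact_mod_cast hd
  have h1 : (m + (l : ℤ)) / d ≤ m / d + l := by
    have h2 : (m + (l : ℤ)) / d ≤ (m + l * d) / d := by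
      apply Int.ediv_le_ediv hd0
      nlinarith
    rwa [Int.add_mul_ediv_right _ _ (ne_of_gt hd0)] at h2
  simp only [Pfin]
  rw [Int.card_Ioc]
  omega

lemma Pset_interval {m : ℤ} {d l : ℕ} {x y w : ℤ}
    (hx : x ∈ Pset m d l) (hy : y ∈ Pset m d l) (h1 : x ≤ w) (h2 : w ≤ y) :
    w ∈ Pset m d l := by
  have hd0 : (0 : ℤ) ≤ (d : ℤ) := by positivity
  exact ⟨lt_of_lt_of_le hx.1 (mul_le_mul_of_nonneg_right h1 hd0),
    le_trans (mul_le_mul_of_nonneg_right h2 hd0) hy.2⟩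

/-- The move lemma: shifting an overlapping interval up one step. -/
lemma move_lemma {r n : ℕ} (l d : Fin r → ℕ) (s : Fin (n + 1) → ℕ)
    (hd : ∀ k, 1 ≤ d k) (m : Fin r → ℤ) (i j : Fin r) (hij : i ≠ j) (b : ℤ)
    (hbi : b ∈ Pset (m i) (d i) (l i)) (hbj : b ∈ Pset (m j) (d j) (l j))
    (hmin : ∀ w ∈ Pset (m i) (d i) (l i), b ≤ w) :
    Nset l d s (Function.update m i (m i + (d i : ℤ))) ⊆ Nset l d s m ∧
    (⋃ k, Pset (m k) (d k) (l k)) ⊆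
      ⋃ k, Pset ((Function.update m i (m i + (d i : ℤ))) k) (d k) (l k) := by
  set m' : Fin r → ℤ := Function.update m i (m i + (d i : ℤ)) with hm'
  have hm'i : m' i = m i + (d i : ℤ) := Function.update_self i _ m
  have hm'k : ∀ k, k ≠ i → m' k = m k := fun k hk => Function.update_of_ne hk _ m
  have hD : (1 : ℤ) ≤ (d i : ℤ) := by exact_mod_cast hd i
  -- if z is in the "q-changing zone" then z ∈ P_i(m')
  have claim_aux : ∀ z : ℤ, m i + (l i : ℤ) < z * d i → z * d i ≤ m i + d i + l i →
      z ∈ Pset (m' i) (d i) (l i) := by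
    intro z h1 h2
    rw [hm'i]
    refine ⟨?_, by linarith⟩
    by_contra hcon
    push_neg at hcon
    have hbz : b < z := by
      have : b * d i < z * d i := by linarith [hbi.2]
      exact lt_of_mul_lt_mul_right this (by linarith)
    have : (b + 1) * d i ≤ z * d i := by
      apply mul_le_mul_of_nonneg_right (by omega) (by linarith)
    have : b * d i ≤ m i := by linarith [this]
    linarith [hbi.1]
  have claim1 : ∀ z : ℤ, (∀ k, z ∉ Pset (m' k) (d k) (l k)) →
      ∀ k, z ∉ Pset (m k) (d k) (l k) := by
    intro z hz k hzk
    by_cases hk : k = i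
    · subst hk
      have hub : z * d k ≤ m k + d k + l k := by linarith [hzk.2]
      have hlb : ¬ (m k + (d k : ℤ) < z * d k) := by
        intro hcon
        exact hz k (by rw [hm'i]; exact ⟨hcon, hub⟩)
      push_neg at hlb
      have hbz : b ≤ z := hmin z hzk
      rcases eq_or_lt_of_le hbz with heq | hlt
      · subst heq
        exact hz j (by rw [hm'k j hij.symm]; exact hbj)
      · have : (b + 1) * d k ≤ z * d k := by
          apply mul_le_mul_of_nonneg_right (by omega) (by linarith)
        have : b * d k ≤ m k := by linarith
        linarith [hbi.1]
    · exact hz k (by rw [hm'k k hk]; exact hzk)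
  have claim2 : ∀ z : ℤ, (∀ k, z ∉ Pset (m' k) (d k) (l k)) →
      qval l d m' z = qval l d m z := by
    intro z hz
    unfold qval
    congr 1
    apply Finset.filter_congr
    intro k _
    by_cases hk : k = i
    · subst hk
      rw [hm'i]
      constructor
      · intro h; linarith
      · intro h2
        by_contra hcon
        push_neg at hcon
        exact hz k (claim_aux z h2 (by linarith))
    · rw [hm'k k hk]
  constructor
  · rintro ν ⟨p, hp, z, ⟨hzS, hzU⟩, hν⟩
    exact ⟨p, hp, z, ⟨hzS, claim1 z hzU⟩, by rw [hν, claim2 z hzU]⟩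
  · intro z hz
    rw [Set.mem_iUnion] at hz ⊢
    obtain ⟨k, hzk⟩ := hz
    by_cases hk : k = i
    · subst hk
      have hbz : b ≤ z := hmin z hzk
      rcases eq_or_lt_of_le hbz with heq | hlt
      · exact ⟨j, by rw [hm'k j hij.symm]; exact heq ▸ hbj⟩
      · refine ⟨k, ?_⟩
        rw [hm'i]
        constructor
        · have : (b + 1) * d k ≤ z * d k := by
            apply mul_le_mul_of_nonneg_right (by omega) (by linarith)
          linarith [hbi.1]
        · linarith [hzk.2]
    · exact ⟨k, by rw [hm'k k hk]; exact hzk⟩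



lemma key_lemma {r n : ℕ} (l d : Fin r → ℕ) (s : Fin (n + 1) → ℕ)
    (hl : ∀ k, 1 ≤ l k) (hd : ∀ k, 1 ≤ d k) (hsum : ∑ k, l k = n)
    (hs : ∀ i, 0 < s i) (m : Fin r → ℤ)
    (hN : Nset l d s m ⊆ {0, 1}) :
    (0 : ℤ) ∈ Nset l d s m ∧ (1 : ℤ) ∈ Nset l d s m ∧
    ∀ k, m k + (l k : ℤ) < ((∑ i, (s i : ℤ)) + 1) * (d k : ℤ) := by
  classical
  set T : ℤ := ∑ i, (s i : ℤ) with hT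
  set A : ℕ → Finset (Fin (n + 1)) := fun c => Finset.univ.filter (fun i => (i : ℕ) < c) with hA
  set L : ℕ → ℤ := fun c => ∑ i ∈ A c, (s i : ℤ) with hL
  have cardA : ∀ c, c ≤ n + 1 → (A c).card = c := by
    intro c hc
    apply Finset.card_eq_of_bijective (fun j hj => (⟨j, by omega⟩ : Fin (n + 1)))
    · intro a ha
      simp only [hA, Finset.mem_filter, Finset.mem_univ, true_and] at ha
      exact ⟨(a : ℕ), ha, rfl⟩
    · intro j hj
      simp only [hA, Finset.mem_filter, Finset.mem_univ, true_and]
      exact hj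
    · intro j j' hj hj' h
      simpa using congrArg Fin.val h
  have L_nonneg : ∀ c, 0 ≤ L c := fun c => Finset.sum_nonneg fun i _ => by positivity
  have L_lt : ∀ c c', c < c' → c' ≤ n + 1 → L c < L c' := by
    intro c c' hcc hc'
    have hi0 : (⟨c, by omega⟩ : Fin (n + 1)) ∈ A c' := by
      simp only [hA, Finset.mem_filter, Finset.mem_univ, true_and]; exact hcc
    apply Finset.sum_lt_sum_of_subset ?_ hi0 ?_ ?_ ?_
    · intro i hi
      simp only [hA, Finset.mem_filter, Finset.mem_univ, true_and] at hi ⊢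
      omega
    · simp only [hA, Finset.mem_filter, Finset.mem_univ, true_and]; omega
    · exact_mod_cast hs _
    · intro j _ _; positivity
  have L_mem : ∀ c, c ≤ n + 1 → L c ∈ Sset s c := fun c hc => ⟨A c, cardA c hc, rfl⟩
  set M : ℕ → ℤ := fun c => T - L c with hM
  have M_mem : ∀ c, c ≤ n + 1 → M c ∈ Sset s (n + 1 - c) := by
    intro c hc
    refine ⟨Finset.univ.filter (fun i => ¬ (i : ℕ) < c), ?_, ?_⟩
    · have h1 := Finset.card_filter_add_card_filter_not
        (s := (Finset.univ : Finset (Fin (n + 1)))) (p := fun i => (i : ℕ) < c)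
      have h2 := cardA c hc
      simp only [hA] at h2
      simp only [Finset.card_univ, Fintype.card_fin] at h1
      omega
    · have h1 := Finset.sum_filter_add_sum_filter_not (Finset.univ : Finset (Fin (n + 1)))
        (fun i => (i : ℕ) < c) (fun i => (s i : ℤ))
      have h2 : L c = ∑ i ∈ Finset.univ.filter (fun i : Fin (n + 1) => (i : ℕ) < c), (s i : ℤ) := rfl
      have h3 : T = ∑ i : Fin (n + 1), (s i : ℤ) := rfl
      simp only [hM]
      linarith
  have pig : ∀ f : ℕ → ℤ, (∀ c c', c < n + 2 → c' < n + 2 → c ≠ c' → f c ≠ f c') →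
      ¬ (∀ c, c ≤ n + 1 → ∃ k, f c ∈ Pset (m k) (d k) (l k)) := by
    intro f hinj hall
    have hsub : (Finset.range (n + 2)).image f ⊆
        Finset.univ.biUnion (fun k => Pfin (m k) (d k) (l k)) := by
      intro x hx
      simp only [Finset.mem_image, Finset.mem_range] at hx
      obtain ⟨c, hc, rfl⟩ := hx
      obtain ⟨k, hk⟩ := hall c (by omega)
      exact Finset.mem_biUnion.mpr ⟨k, Finset.mem_univ k, (mem_Pfin (hd k)).mpr hk⟩
    have hcard : ((Finset.range (n + 2)).image f).card = n + 2 := by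
      rw [Finset.card_image_of_injOn, Finset.card_range]
      intro a ha b hb hab
      by_contra hne
      exact hinj a b (Finset.mem_range.mp ha) (Finset.mem_range.mp hb) hne hab
    have h1 := Finset.card_le_card hsub
    have h2 := Finset.card_biUnion_le (s := (Finset.univ : Finset (Fin r)))
      (t := fun k => Pfin (m k) (d k) (l k))
    have h3 : ∑ k, (Pfin (m k) (d k) (l k)).card ≤ ∑ k, l k :=
      Finset.sum_le_sum fun k _ => card_Pfin (hd k)
    omega
  -- Part 1 : 0 ∈ N
  have h0mem : (0 : ℤ) ∈ Nset l d s m := by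
    have hex : ∃ c, c ≤ n + 1 ∧ ∀ k, L c ∉ Pset (m k) (d k) (l k) := by
      by_contra hcon
      push_neg at hcon
      apply pig L ?_ ?_
      · intro c c' hc hc' hne
        rcases Nat.lt_or_ge c c' with h | h
        · exact ne_of_lt (L_lt c c' h (by omega))
        · exact (ne_of_lt (L_lt c' c (by omega) (by omega))).symm
      · intro c hc
        obtain ⟨k, hk⟩ := hcon c hc
        exact ⟨k, hk⟩
    set c0 := Nat.find hex with hc0
    obtain ⟨hc0le, hc0unc⟩ := Nat.find_spec hex
    have hmin : ∀ c, c < c0 → ∃ k, L c ∈ Pset (m k) (d k) (l k) := by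
      intro c hc
      have h := Nat.find_min hex hc
      push_neg at h
      obtain ⟨k, hk⟩ := h (by omega)
      exact ⟨k, hk⟩
    have hν : ((c0 : ℤ) - qval l d m (L c0)) ∈ Nset l d s m :=
      ⟨c0, hc0le, L c0, ⟨L_mem c0 hc0le, hc0unc⟩, rfl⟩
    have hν01 := hN hν
    simp only [Set.mem_insert_iff, Set.mem_singleton_iff] at hν01
    rcases hν01 with h | h
    · exact h ▸ hν
    · exfalso
      set q := qval l d m (L c0) with hq
      set Kf := Finset.univ.filter (fun k => m k + (l k : ℤ) < L c0 * (d k : ℤ)) with hKf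
      have hqK : q = ∑ k ∈ Kf, l k := rfl
      have hcover : ∀ c, c < c0 → ∃ k ∈ Kf, L c ∈ Pfin (m k) (d k) (l k) := by
        intro c hc
        obtain ⟨k, hk⟩ := hmin c hc
        refine ⟨k, ?_, (mem_Pfin (hd k)).mpr hk⟩
        simp only [hKf, Finset.mem_filter, Finset.mem_univ, true_and]
        by_contra hcon
        push_neg at hcon
        have hLlt : L c < L c0 := L_lt c c0 hc hc0le
        have hmk : m k < L c0 * (d k : ℤ) :=
          lt_of_lt_of_le hk.1 (mul_le_mul_of_nonneg_right hLlt.le (by positivity))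
        exact hc0unc k ⟨hmk, hcon⟩
      have hXsub : (Finset.range c0).image L ⊆
          Kf.biUnion (fun k => Pfin (m k) (d k) (l k)) := by
        intro x hx
        simp only [Finset.mem_image, Finset.mem_range] at hx
        obtain ⟨c, hc, rfl⟩ := hx
        obtain ⟨k, hk1, hk2⟩ := hcover c hc
        exact Finset.mem_biUnion.mpr ⟨k, hk1, hk2⟩
      have hXcard : ((Finset.range c0).image L).card = c0 := by
        rw [Finset.card_image_of_injOn, Finset.card_range]
        intro a ha b hb hab
        by_contra hne
        have ha' := Finset.mem_range.mp ha
        have hb' := Finset.mem_range.mp hb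
        rcases Nat.lt_or_ge a b with h' | h'
        · exact ne_of_lt (L_lt a b h' (by omega)) hab
        · exact ne_of_lt (L_lt b a (by omega) (by omega)) hab.symm
      have h1 := Finset.card_le_card hXsub
      have h2 := Finset.card_biUnion_le (s := Kf) (t := fun k => Pfin (m k) (d k) (l k))
      have h3 : ∑ k ∈ Kf, (Pfin (m k) (d k) (l k)).card ≤ ∑ k ∈ Kf, l k :=
        Finset.sum_le_sum fun k _ => card_Pfin (hd k)
      omega
  -- Part 2 : 1 ∈ N and the bound
  have hex : ∃ c, c ≤ n + 1 ∧ ∀ k, M c ∉ Pset (m k) (d k) (l k) := by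
    by_contra hcon
    push_neg at hcon
    apply pig M ?_ ?_
    · intro c c' hc hc' hne
      intro hMeq
      simp only [hM] at hMeq
      rcases Nat.lt_or_ge c c' with h | h
      · have := L_lt c c' h (by omega)
        linarith
      · have := L_lt c' c (by omega) (by omega)
        linarith
    · intro c hc
      obtain ⟨k, hk⟩ := hcon c hc
      exact ⟨k, hk⟩
  set c0 := Nat.find hex with hc0
  obtain ⟨hc0le, hc0unc⟩ := Nat.find_spec hex
  have hmin : ∀ c, c < c0 → ∃ k, M c ∈ Pset (m k) (d k) (l k) := by
    intro c hc
    have h := Nat.find_min hex hc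
    push_neg at h
    obtain ⟨k, hk⟩ := h (by omega)
    exact ⟨k, hk⟩
  set q := qval l d m (M c0) with hq
  have hν : (((n + 1 - c0 : ℕ) : ℤ) - q) ∈ Nset l d s m :=
    ⟨n + 1 - c0, by omega, M c0, ⟨M_mem c0 hc0le, hc0unc⟩, rfl⟩
  set K := Finset.univ.filter (fun k => ¬ (m k + (l k : ℤ) < M c0 * (d k : ℤ))) with hK
  have hqK : q + ∑ k ∈ K, l k = n := by
    have h1 := Finset.sum_filter_add_sum_filter_not Finset.univ
      (fun k => m k + (l k : ℤ) < M c0 * (d k : ℤ)) l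
    rw [hsum] at h1
    exact h1
  have hcover : ∀ c, c < c0 → ∃ k ∈ K, M c ∈ Pfin (m k) (d k) (l k) := by
    intro c hc
    obtain ⟨k, hk⟩ := hmin c hc
    refine ⟨k, ?_, (mem_Pfin (hd k)).mpr hk⟩
    simp only [hK, Finset.mem_filter, Finset.mem_univ, true_and]
    intro hcon
    have hMlt : M c0 < M c := by
      have := L_lt c c0 hc hc0le
      simp only [hM]; linarith
    have : M c0 * (d k : ℤ) < M c * (d k : ℤ) := by
      apply mul_lt_mul_of_pos_right hMlt
      exact_mod_cast hd k
    linarith [hk.2]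
  have hXsub : (Finset.range c0).image M ⊆
      K.biUnion (fun k => Pfin (m k) (d k) (l k)) := by
    intro x hx
    simp only [Finset.mem_image, Finset.mem_range] at hx
    obtain ⟨c, hc, rfl⟩ := hx
    obtain ⟨k, hk1, hk2⟩ := hcover c hc
    exact Finset.mem_biUnion.mpr ⟨k, hk1, hk2⟩
  have hXcard : ((Finset.range c0).image M).card = c0 := by
    rw [Finset.card_image_of_injOn, Finset.card_range]
    intro a ha b hb hab
    by_contra hne
    have ha' := Finset.mem_range.mp ha
    have hb' := Finset.mem_range.mp hb
    simp only [hM] at hab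
    rcases Nat.lt_or_ge a b with h' | h'
    · have := L_lt a b h' (by omega)
      linarith
    · have := L_lt b a (by omega) (by omega)
      linarith
  have h1 := Finset.card_le_card hXsub
  have h2 := Finset.card_biUnion_le (s := K) (t := fun k => Pfin (m k) (d k) (l k))
  have h3 : ∑ k ∈ K, (Pfin (m k) (d k) (l k)).card ≤ ∑ k ∈ K, l k :=
    Finset.sum_le_sum fun k _ => card_Pfin (hd k)
  have hqn : q + c0 ≤ n := by omega
  have hν01 := hN hν
  simp only [Set.mem_insert_iff, Set.mem_singleton_iff] at hν01
  have hν1 : (((n + 1 - c0 : ℕ) : ℤ) - q) = 1 := by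
    rcases hν01 with h | h
    · exfalso; omega
    · exact h
  have h1mem : (1 : ℤ) ∈ Nset l d s m := hν1 ▸ hν
  have hqval : q = n - c0 := by omega
  have hKsum : ∑ k ∈ K, l k = c0 := by omega
  have hXeq : (Finset.range c0).image M = K.biUnion (fun k => Pfin (m k) (d k) (l k)) :=
    Finset.eq_of_subset_of_card_le hXsub (by omega)
  have hcardeq : ∀ k ∈ K, (Pfin (m k) (d k) (l k)).card = l k := by
    by_contra hcon
    push_neg at hcon
    obtain ⟨k0, hk0K, hk0⟩ := hcon
    have hk0lt : (Pfin (m k0) (d k0) (l k0)).card < l k0 :=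
      lt_of_le_of_ne (card_Pfin (hd k0)) hk0
    have h5 : ∑ k ∈ K, (Pfin (m k) (d k) (l k)).card < ∑ k ∈ K, l k :=
      Finset.sum_lt_sum (fun k (_ : k ∈ K) => card_Pfin (hd k)) ⟨k0, hk0K, hk0lt⟩
    omega
  refine ⟨h0mem, h1mem, ?_⟩
  intro k
  have hd0 : (0 : ℤ) < (d k : ℤ) := by exact_mod_cast hd k
  have hMT : M c0 ≤ T := by simp only [hM]; linarith [L_nonneg c0]
  by_cases hkK : k ∈ K
  · have hcard := hcardeq k hkK
    have hne : (Pfin (m k) (d k) (l k)).Nonempty := by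
      rw [← Finset.card_pos, hcard]; exact hl k
    have hne' : m k / (d k : ℤ) < (m k + (l k : ℤ)) / (d k : ℤ) := by
      obtain ⟨x, hx⟩ := hne
      simp only [Pfin, Finset.mem_Ioc] at hx
      omega
    have htop : ((m k + (l k : ℤ)) / (d k : ℤ)) ∈ Pfin (m k) (d k) (l k) :=
      Finset.mem_Ioc.mpr ⟨hne', le_refl _⟩
    have htopX : ((m k + (l k : ℤ)) / (d k : ℤ)) ∈ (Finset.range c0).image M := by
      rw [hXeq]
      exact Finset.mem_biUnion.mpr ⟨k, hkK, htop⟩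
    simp only [Finset.mem_image, Finset.mem_range] at htopX
    obtain ⟨c, hc, hMc⟩ := htopX
    have hcT : (m k + (l k : ℤ)) / (d k : ℤ) ≤ T := by
      rw [← hMc]; simp only [hM]; linarith [L_nonneg c]
    by_contra hcon
    push_neg at hcon
    have : T + 1 ≤ (m k + (l k : ℤ)) / (d k : ℤ) :=
      (Int.le_ediv_iff_mul_le hd0).mpr hcon
    linarith
  · simp only [hK, Finset.mem_filter, Finset.mem_univ, true_and, not_not] at hkK
    have : M c0 * (d k : ℤ) ≤ (T + 1) * (d k : ℤ) :=
      mul_le_mul_of_nonneg_right (by linarith) (by linarith)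
    linarith


lemma recurse {r n : ℕ} (l d : Fin r → ℕ) (s : Fin (n + 1) → ℕ)
    (hl : ∀ k, 1 ≤ l k) (hd : ∀ k, 1 ≤ d k) (hsum : ∑ k, l k = n)
    (hs : ∀ i, 0 < s i) :
    ∀ (B : ℕ) (m : Fin r → ℤ), Nset l d s m ⊆ {0, 1} →
      (∑ k, (((∑ i, (s i : ℤ)) + 1) * (d k : ℤ) - m k - l k).toNat) < B →
      ∃ m', Nset l d s m' ⊆ {0, 1} ∧
        (∀ a a' : Fin r, a ≠ a' →
          Disjoint (Pset (m' a) (d a) (l a)) (Pset (m' a') (d a') (l a'))) ∧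
        (⋃ a, Pset (m a) (d a) (l a)) ⊆ ⋃ a, Pset (m' a) (d a) (l a) := by
  intro B
  induction B with
  | zero => intro m _ h; omega
  | succ B ih =>
    intro m hN hμ
    by_cases hdis : ∀ a a' : Fin r, a ≠ a' →
        Disjoint (Pset (m a) (d a) (l a)) (Pset (m a') (d a') (l a'))
    · exact ⟨m, hN, hdis, subset_rfl⟩
    · push_neg at hdis
      obtain ⟨k, k', hkk', hnd⟩ := hdis
      rw [Set.not_disjoint_iff] at hnd
      obtain ⟨z0, hz0k, hz0k'⟩ := hnd
      have go : ∀ (i j : Fin r), i ≠ j → ∀ b : ℤ,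
          b ∈ Pset (m i) (d i) (l i) → b ∈ Pset (m j) (d j) (l j) →
          (∀ w ∈ Pset (m i) (d i) (l i), b ≤ w) →
          ∃ m', Nset l d s m' ⊆ {0, 1} ∧
            (∀ a a' : Fin r, a ≠ a' →
              Disjoint (Pset (m' a) (d a) (l a)) (Pset (m' a') (d a') (l a'))) ∧
            (⋃ a, Pset (m a) (d a) (l a)) ⊆ ⋃ a, Pset (m' a) (d a) (l a) := by
        intro i j hij b hbi hbj hmin
        obtain ⟨hNsub, hUsub⟩ := move_lemma l d s hd m i j hij b hbi hbj hmin
        set m'' := Function.update m i (m i + (d i : ℤ)) with hm''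
        have hN'' : Nset l d s m'' ⊆ {0, 1} := hNsub.trans hN
        have hbound := (key_lemma l d s hl hd hsum hs m'' hN'').2.2
        have hdi : (1 : ℤ) ≤ (d i : ℤ) := by exact_mod_cast hd i
        have hμ'' : (∑ a, (((∑ i, (s i : ℤ)) + 1) * (d a : ℤ) - m'' a - l a).toNat) < B := by
          have hlt : (∑ a, (((∑ i, (s i : ℤ)) + 1) * (d a : ℤ) - m'' a - l a).toNat) <
              ∑ a, (((∑ i, (s i : ℤ)) + 1) * (d a : ℤ) - m a - l a).toNat := by
            apply Finset.sum_lt_sum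
            · intro a _
              by_cases ha : a = i
              · subst ha
                have hb := hbound a
                rw [hm'', Function.update_self] at hb ⊢
                omega
              · rw [hm'', Function.update_of_ne ha]
            · refine ⟨i, Finset.mem_univ i, ?_⟩
              have hb := hbound i
              rw [hm'', Function.update_self] at hb ⊢
              omega
          omega
        obtain ⟨m', h1, h2, h3⟩ := ih m'' hN'' hμ''
        exact ⟨m', h1, h2, hUsub.trans h3⟩
      have hzk : z0 ∈ Pfin (m k) (d k) (l k) := (mem_Pfin (hd k)).mpr hz0k
      have hzk' : z0 ∈ Pfin (m k') (d k') (l k') := (mem_Pfin (hd k')).mpr hz0k'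
      set b1 := (Pfin (m k) (d k) (l k)).min' ⟨z0, hzk⟩ with hb1
      set b2 := (Pfin (m k') (d k') (l k')).min' ⟨z0, hzk'⟩ with hb2
      have hb1m : b1 ∈ Pset (m k) (d k) (l k) :=
        (mem_Pfin (hd k)).mp (Finset.min'_mem _ _)
      have hb2m : b2 ∈ Pset (m k') (d k') (l k') :=
        (mem_Pfin (hd k')).mp (Finset.min'_mem _ _)
      have hb1min : ∀ w ∈ Pset (m k) (d k) (l k), b1 ≤ w := fun w hw =>
        Finset.min'_le _ w ((mem_Pfin (hd k)).mpr hw)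
      have hb2min : ∀ w ∈ Pset (m k') (d k') (l k'), b2 ≤ w := fun w hw =>
        Finset.min'_le _ w ((mem_Pfin (hd k')).mpr hw)
      rcases le_total b2 b1 with hcmp | hcmp
      · have hb1k' : b1 ∈ Pset (m k') (d k') (l k') :=
          Pset_interval hb2m hz0k' hcmp (hb1min z0 hz0k)
        exact go k k' hkk' b1 hb1m hb1k' hb1min
      · have hb2k : b2 ∈ Pset (m k) (d k) (l k) :=
          Pset_interval hb1m hz0k hcmp (hb2min z0 hz0k')
        exact go k' k (Ne.symm hkk') b2 hb2m hb2k hb2min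

theorem stmt16 (r n : ℕ) (hr : 1 ≤ r) (l d : Fin r → ℕ)
    (hl : ∀ k, 1 ≤ l k) (hd : ∀ k, 1 ≤ d k) (hsum : ∑ k, l k = n)
    (s : Fin (n + 1) → ℕ) (hs : ∀ i, 0 < s i) (hmono : Monotone s)
    (m : Fin r → ℤ) (hdet : Nset l d s m = {0, 1}) :
    ∃ m' : Fin r → ℤ,
      Nset l d s m' = {0, 1} ∧
      (∀ k k' : Fin r, k ≠ k' →
        Disjoint (Pset (m' k) (d k) (l k)) (Pset (m' k') (d k') (l k'))) ∧
      (⋃ k, Pset (m k) (d k) (l k)) ⊆ ⋃ k, Pset (m' k) (d k) (l k) := by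
  have hNsub : Nset l d s m ⊆ {0, 1} := le_of_eq hdet
  obtain ⟨m', hN', hdis, hsub⟩ := recurse l d s hl hd hsum hs
    ((∑ k, (((∑ i, (s i : ℤ)) + 1) * (d k : ℤ) - m k - l k).toNat) + 1) m hNsub (by omega)
  obtain ⟨h0, h1, _⟩ := key_lemma l d s hl hd hsum hs m' hN'
  refine ⟨m', ?_, hdis, hsub⟩
  apply Set.Subset.antisymm hN'
  rintro x hx
  simp only [Set.mem_insert_iff, Set.mem_singleton_iff] at hx
  rcases hx with rfl | rfl
  · exact h0
  · exact h1
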